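/- Let Λ ∈ (0,1) and let ρ be a d×d complex Hermitian positive semidefinite matrix with trace 1 such that every eigenvalue of ρ is either 0 or at least Λ. Then for every positive integer K, |(−∑_j λ_j ln λ_j) − ∑_{k=1}^{K} (1/k) · tr(ρ(I−ρ)^k)| ≤ (1−Λ)^{K+1} / (Λ(K+1)), where λ_1,…,λ_d are the (real) eigenvalues of ρ and the summand λ ln λ is interpreted as 0 when λ = 0. -/

import Mathlib

open Matrix ComplexOrder

lemma conj_pow_aux {d : ℕ} (U M : Matrix (Fin d) (Fin d) ℂ)
    (hU1 : U * star U = 1) (hU2 : star U * U = 1) (k : ℕ) :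
    (U * M * star U) ^ k = U * M ^ k * star U := by
  induction k with
  | zero => simp [hU1]
  | succ n ih =>
      rw [pow_succ, pow_succ, ih]
      rw [show U * M ^ n * star U * (U * M * star U)
            = U * M ^ n * (star U * U) * M * star U by
        simp only [Matrix.mul_assoc]]
      rw [hU2]
      simp only [Matrix.mul_one, Matrix.mul_assoc]

lemma trace_mul_pow_eq {d : ℕ} (ρ : Matrix (Fin d) (Fin d) ℂ) (hH : ρ.IsHermitian) (k : ℕ) :
    (ρ * (1 - ρ) ^ k).trace
      = ∑ j, ((hH.eigenvalues j : ℂ) * (1 - (hH.eigenvalues j : ℂ)) ^ k) := by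
  set U := (hH.eigenvectorUnitary : Matrix (Fin d) (Fin d) ℂ) with hUdef
  have hU1 : U * star U = 1 := Matrix.mem_unitaryGroup_iff.mp (hH.eigenvectorUnitary).2
  have hU2 : star U * U = 1 := Matrix.mem_unitaryGroup_iff'.mp (hH.eigenvectorUnitary).2
  set D : Matrix (Fin d) (Fin d) ℂ := diagonal (RCLike.ofReal ∘ hH.eigenvalues) with hDdef
  have hspec : ρ = U * D * star U := hH.spectral_theorem
  have h1 : (1 : Matrix (Fin d) (Fin d) ℂ) - ρ = U * (1 - D) * star U := by
    rw [hspec, Matrix.mul_sub, Matrix.sub_mul, Matrix.mul_one, hU1]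
  have h2 : ρ * (1 - ρ) ^ k = U * (D * (1 - D) ^ k) * star U := by
    rw [h1, conj_pow_aux U (1 - D) hU1 hU2 k, hspec]
    rw [show U * D * star U * (U * (1 - D) ^ k * star U)
          = U * D * (star U * U) * (1 - D) ^ k * star U by
      simp only [Matrix.mul_assoc]]
    rw [hU2]
    simp only [Matrix.mul_one, Matrix.mul_assoc]
  rw [h2, Matrix.trace_mul_cycle, ← Matrix.mul_assoc, hU2, Matrix.one_mul]
  have h3 : D * (1 - D) ^ k
      = diagonal (fun j => (hH.eigenvalues j : ℂ) * (1 - (hH.eigenvalues j : ℂ)) ^ k) := by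
    have : (1 : Matrix (Fin d) (Fin d) ℂ) - D
        = diagonal (fun j => 1 - (hH.eigenvalues j : ℂ)) := by
      rw [hDdef, ← Matrix.diagonal_one, Matrix.diagonal_sub]
      rfl
    rw [this, Matrix.diagonal_pow, hDdef, Matrix.diagonal_mul_diagonal]
    rfl
  rw [h3, Matrix.trace_diagonal]

lemma real_aux {Λ lam : ℝ} (hΛ0 : 0 < Λ) (hΛ1 : Λ < 1)
    (hlam : lam = 0 ∨ Λ ≤ lam) (hle : lam ≤ 1) {K : ℕ} (hK : 1 ≤ K) :
    |(-(lam * Real.log lam)) - ∑ k ∈ Finset.Icc 1 K, (1 / (k : ℝ)) * (lam * (1 - lam) ^ k)|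
      ≤ lam * ((1 - Λ) ^ (K + 1) / (Λ * (K + 1))) := by
  rcases hlam with h0 | hΛlam
  · simp [h0]
  have hlam0 : 0 < lam := lt_of_lt_of_le hΛ0 hΛlam
  set x := 1 - lam with hxdef
  have hx0 : 0 ≤ x := by simp [hxdef]; linarith
  have hxΛ : x ≤ 1 - Λ := by simp [hxdef]; linarith
  have hx1 : |x| < 1 := by rw [abs_of_nonneg hx0]; linarith
  have hs := (Real.hasSum_pow_div_log_of_abs_lt_one hx1).mul_left lam
  have h1x : 1 - x = lam := by simp [hxdef]
  rw [h1x] at hs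
  -- hs : HasSum (fun n => lam * (x ^ (n+1) / (n+1))) (lam * -Real.log lam)
  have hsummable := hs.summable
  have hpartial : ∑ k ∈ Finset.Icc 1 K, (1 / (k : ℝ)) * (lam * (1 - lam) ^ k)
      = ∑ n ∈ Finset.range K, lam * (x ^ (n + 1) / (n + 1)) := by
    rw [← Finset.Ico_add_one_right_eq_Icc, Finset.sum_Ico_eq_sum_range]
    simp only [Nat.add_sub_cancel]
    refine Finset.sum_congr rfl fun n _ => ?_
    have : ((1 + n : ℕ) : ℝ) = (n : ℝ) + 1 := by push_cast; ring
    rw [this, ← hxdef]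
    rw [show 1 + n = n + 1 by ring]
    ring
  have htail := Summable.sum_add_tsum_nat_add K hsummable
  have hdiff : (-(lam * Real.log lam)) - ∑ k ∈ Finset.Icc 1 K, (1 / (k : ℝ)) * (lam * (1 - lam) ^ k)
      = ∑' n : ℕ, lam * (x ^ (n + K + 1) / (((n + K : ℕ) : ℝ) + 1)) := by
    rw [hpartial]
    linarith [htail, hs.tsum_eq]
  rw [hdiff]
  -- bound the tail
  have hterm : ∀ n : ℕ, lam * (x ^ (n + K + 1) / (((n + K : ℕ) : ℝ) + 1))
      ≤ (lam * x ^ (K + 1) / (K + 1)) * x ^ n := by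
    intro n
    have hK1 : (0:ℝ) < (K : ℝ) + 1 := by positivity
    have hnK : ((K:ℝ) + 1) ≤ (((n + K : ℕ) : ℝ) + 1) := by push_cast; linarith [Nat.cast_nonneg (α := ℝ) n]
    have hpow : x ^ (n + K + 1) = x ^ (K + 1) * x ^ n := by
      rw [← pow_add]; ring_nf
    have h1 : x ^ (n + K + 1) / (((n + K : ℕ) : ℝ) + 1) ≤ x ^ (n + K + 1) / ((K:ℝ) + 1) :=
      div_le_div_of_nonneg_left (by positivity) hK1 hnK
    calc lam * (x ^ (n + K + 1) / (((n + K : ℕ) : ℝ) + 1))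
        ≤ lam * (x ^ (n + K + 1) / ((K:ℝ) + 1)) :=
          mul_le_mul_of_nonneg_left h1 hlam0.le
      _ = (lam * x ^ (K + 1) / (K + 1)) * x ^ n := by rw [hpow]; ring
  have htermnn : ∀ n : ℕ, 0 ≤ lam * (x ^ (n + K + 1) / (((n + K : ℕ) : ℝ) + 1)) := by
    intro n; positivity
  have hgeo : Summable (fun n : ℕ => (lam * x ^ (K + 1) / (K + 1)) * x ^ n) :=
    (summable_geometric_of_lt_one hx0 (by linarith)).mul_left _
  have hsumtail : Summable (fun n : ℕ => lam * (x ^ (n + K + 1) / (((n + K : ℕ) : ℝ) + 1))) :=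
    Summable.of_nonneg_of_le htermnn hterm hgeo
  have hbound : ∑' n : ℕ, lam * (x ^ (n + K + 1) / (((n + K : ℕ) : ℝ) + 1))
      ≤ ∑' n : ℕ, (lam * x ^ (K + 1) / (K + 1)) * x ^ n :=
    Summable.tsum_le_tsum hterm hsumtail hgeo
  have hgeoval : ∑' n : ℕ, (lam * x ^ (K + 1) / (K + 1)) * x ^ n
      = (lam * x ^ (K + 1) / (K + 1)) * (1 - x)⁻¹ := by
    rw [tsum_mul_left, tsum_geometric_of_lt_one hx0 (by linarith)]
  rw [abs_of_nonneg (tsum_nonneg htermnn)]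
  refine hbound.trans ?_
  rw [hgeoval, h1x]
  have hfinal : lam * x ^ (K + 1) / (K + 1) * lam⁻¹ = x ^ (K + 1) / (K + 1) := by
    field_simp
  rw [hfinal]
  -- x^(K+1)/(K+1) ≤ lam * ((1-Λ)^(K+1)/(Λ*(K+1)))
  have hxpow : x ^ (K + 1) ≤ (1 - Λ) ^ (K + 1) := pow_le_pow_left₀ hx0 hxΛ _
  have hK1 : (0:ℝ) < (K : ℝ) + 1 := by positivity
  rw [div_le_iff₀ hK1] at *
  have h2 : lam * ((1 - Λ) ^ (K + 1) / (Λ * ((K:ℝ) + 1))) * ((K:ℝ) + 1)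
      = (lam / Λ) * (1 - Λ) ^ (K + 1) := by
    field_simp
  rw [h2]
  have h3 : (1:ℝ) ≤ lam / Λ := (one_le_div hΛ0).mpr hΛlam
  nlinarith [pow_nonneg (by linarith : (0:ℝ) ≤ 1 - Λ) (K + 1)]

/-- truncated Taylor series approximation of the von Neumann entropy.
`Real.log 0 = 0` in Mathlib, matching the convention `0 · ln 0 = 0`. -/
theorem stmt_0 (d : ℕ) (Λ : ℝ) (hΛ : Λ ∈ Set.Ioo (0 : ℝ) 1)
    (ρ : Matrix (Fin d) (Fin d) ℂ) (hρ : ρ.PosSemidef) (htr : ρ.trace = 1)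
    (heig : ∀ j, hρ.1.eigenvalues j = 0 ∨ Λ ≤ hρ.1.eigenvalues j)
    (K : ℕ) (hK : 1 ≤ K) :
    |(-∑ j, hρ.1.eigenvalues j * Real.log (hρ.1.eigenvalues j)) -
        ∑ k ∈ Finset.Icc 1 K, (1 / (k : ℝ)) * ((ρ * (1 - ρ) ^ k).trace).re|
      ≤ (1 - Λ) ^ (K + 1) / (Λ * (K + 1)) := by
  obtain ⟨hΛ0, hΛ1⟩ := hΛ
  set lam := hρ.1.eigenvalues with hlamdef
  have htrre : ∀ k : ℕ, ((ρ * (1 - ρ) ^ k).trace).re = ∑ j, lam j * (1 - lam j) ^ k := by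
    intro k
    rw [trace_mul_pow_eq ρ hρ.1 k]
    rw [Complex.re_sum]
    refine Finset.sum_congr rfl fun j _ => ?_
    have : ((lam j : ℂ) * (1 - (lam j : ℂ)) ^ k) = ((lam j * (1 - lam j) ^ k : ℝ) : ℂ) := by
      push_cast; ring
    rw [this, Complex.ofReal_re]
  have hsum1 : ∑ j, lam j = 1 := by
    have h0 := trace_mul_pow_eq ρ hρ.1 0
    simp only [pow_zero, Matrix.mul_one] at h0
    rw [htr] at h0
    simp only [mul_one] at h0
    have : ((∑ j, lam j : ℝ) : ℂ) = 1 := by push_cast; rw [← h0]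
    exact_mod_cast this
  have hlamnn : ∀ j, 0 ≤ lam j := fun j => hρ.eigenvalues_nonneg j
  have hlamle1 : ∀ j, lam j ≤ 1 := by
    intro j
    rw [← hsum1]
    exact Finset.single_le_sum (fun i _ => hlamnn i) (Finset.mem_univ j)
  -- rewrite LHS as sum over j of per-eigenvalue differences
  have hswap : ∑ k ∈ Finset.Icc 1 K, (1 / (k : ℝ)) * ((ρ * (1 - ρ) ^ k).trace).re
      = ∑ j, ∑ k ∈ Finset.Icc 1 K, (1 / (k : ℝ)) * (lam j * (1 - lam j) ^ k) := by
    rw [Finset.sum_comm]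
    refine Finset.sum_congr rfl fun k _ => ?_
    rw [htrre k, Finset.mul_sum]
  rw [hswap, ← Finset.sum_neg_distrib, ← Finset.sum_sub_distrib]
  calc |∑ j, (-(lam j * Real.log (lam j)) -
          ∑ k ∈ Finset.Icc 1 K, (1 / (k : ℝ)) * (lam j * (1 - lam j) ^ k))|
      ≤ ∑ j, |(-(lam j * Real.log (lam j)) -
          ∑ k ∈ Finset.Icc 1 K, (1 / (k : ℝ)) * (lam j * (1 - lam j) ^ k))| :=
        Finset.abs_sum_le_sum_abs _ _
    _ ≤ ∑ j, lam j * ((1 - Λ) ^ (K + 1) / (Λ * (K + 1))) := by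
        refine Finset.sum_le_sum fun j _ => ?_
        exact real_aux hΛ0 hΛ1 (heig j) (hlamle1 j) hK
    _ = (1 - Λ) ^ (K + 1) / (Λ * (K + 1)) := by
        rw [← Finset.sum_mul, hsum1, one_mul]
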